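/- Let p_1 ∈ (0,1) and p_0 ∈ (1/2,1), let π be a stationary distribution of the backwards branching-like process associated to one cookie of strength p_1 and bias parameter p_0, and let G(s) = ∑_{k≥0} π(k) s^k for s ∈ [0,1]. Then for all s ∈ [0,1], G(s) = ((p_1 + s(p_0 − p_1)) / (1 − s(1 − p_0))) · G(p_0 / (1 − s(1 − p_0))). -/

import Mathlib

open MeasureTheory ProbabilityTheory Filter Topology
open scoped ENNReal NNReal

/-- `bbTrans q l m` is the transition probability `p(l,m) = P(A (l+1) = m)` of the
backwards branching-like process: the probability that in a sequence of independent
Bernoulli trials whose `j`-th trial succeeds with probability `q j` (`j` 0-indexed),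
there are exactly `m` failures before the `(l+1)`-st success.  Equivalently, among the
first `m + l` trials there are exactly `l` successes and trial `m + l` is a success. -/
noncomputable def bbTrans (q : ℕ → ℝ) (l m : ℕ) : ℝ :=
  (∑ s ∈ Finset.univ.filter
      (fun s : Fin (m + l) → Bool =>
        (Finset.univ.filter fun j => s j = true).card = l),
    ∏ j : Fin (m + l), (if s j then q (j : ℕ) else 1 - q (j : ℕ)))
    * q (m + l)

/-- `IsStationaryDist q π` : `π` is a stationary distribution of the backwards
branching-like process with transition probabilities `bbTrans q`: a probability mass
function on `ℕ` with `π m = ∑' l, π l * p(l,m)` for all `m`. -/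
def IsStationaryDist (q : ℕ → ℝ) (π : ℕ → ℝ) : Prop :=
  (∀ k, 0 ≤ π k) ∧ (∑' k, π k) = 1 ∧ ∀ m, π m = ∑' l, π l * bbTrans q l m

section Combinatorics

open Finset

lemma card_bool_vec (n l : ℕ) :
    (Finset.univ.filter
      (fun s : Fin n → Bool => (Finset.univ.filter fun j => s j = true).card = l)).card
      = n.choose l := by
  rw [show n.choose l = (Finset.powersetCard l (Finset.univ : Finset (Fin n))).card by
    simp [Finset.card_powersetCard]]
  exact Finset.card_bij' (fun s _ => Finset.univ.filter fun j => s j = true)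
      (fun T _ => fun j => decide (j ∈ T))
      (by intro s hs; simp only [Finset.mem_filter, Finset.mem_univ, true_and] at hs
          simp [Finset.mem_powersetCard, hs])
      (by intro T hT; simp only [Finset.mem_powersetCard] at hT
          simp only [Finset.mem_filter, Finset.mem_univ, true_and]
          rw [← hT.2]; congr 1; ext j; simp)
      (by intro s hs; ext j; simp)
      (by intro T hT; ext j; simp)

lemma prod_bool_const (c : ℝ) (n l : ℕ) (s : Fin n → Bool)
    (hs : (Finset.univ.filter fun j => s j = true).card = l) :
    (∏ j : Fin n, (if s j then c else 1 - c)) = c ^ l * (1 - c) ^ (n - l) := by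
  rw [Finset.prod_ite]
  simp only [Finset.prod_const]
  have h2 : (Finset.univ.filter fun j => ¬ (s j = true)).card = n - l := by
    have := Finset.card_filter_add_card_filter_not
      (s := (Finset.univ : Finset (Fin n))) (p := fun j => s j = true)
    simp only [Finset.card_univ, Fintype.card_fin] at this
    omega
  rw [hs, h2]

lemma card_trues_cons (n : ℕ) (b : Bool) (s : Fin n → Bool) :
    (Finset.univ.filter fun j : Fin (n+1) =>
        (Fin.cons b s : ∀ _ : Fin (n+1), Bool) j = true).card
      = (if b then 1 else 0) + (Finset.univ.filter fun j => s j = true).card := by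
  rw [Finset.card_filter, Finset.card_filter, Fin.sum_univ_succ]
  cases b <;> simp

lemma sum_bool_cons (n l : ℕ) (f : Fin (n+1) → Bool → ℝ) :
    (∑ s ∈ Finset.univ.filter
        (fun s : Fin (n+1) → Bool => (Finset.univ.filter fun j => s j = true).card = l),
      ∏ j, f j (s j))
    = f 0 true * (∑ s ∈ Finset.univ.filter
        (fun s : Fin n → Bool => (Finset.univ.filter fun j => s j = true).card + 1 = l),
      ∏ j : Fin n, f j.succ (s j))
    + f 0 false * (∑ s ∈ Finset.univ.filter
        (fun s : Fin n → Bool => (Finset.univ.filter fun j => s j = true).card = l),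
      ∏ j : Fin n, f j.succ (s j)) := by
  simp only [Finset.sum_filter, Finset.mul_sum]
  rw [← Equiv.sum_comp (Fin.consEquiv (fun _ => Bool))
    (fun s : ∀ _ : Fin (n+1), Bool =>
      if (Finset.univ.filter fun j => s j = true).card = l then ∏ j, f j (s j) else 0)]
  rw [Fintype.sum_prod_type, Fintype.sum_bool]
  have key : ∀ (b : Bool) (s : Fin n → Bool),
      (if (Finset.univ.filter fun j =>
          (Fin.consEquiv (fun _ => Bool)) (b, s) j = true).card = l then
        ∏ j, f j ((Fin.consEquiv (fun _ => Bool)) (b, s) j) else 0)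
      = (if (if b then 1 else 0) + (Finset.univ.filter fun j => s j = true).card = l then
          f 0 b * ∏ j : Fin n, f j.succ (s j) else 0) := by
    intro b s
    have h1 : ((Fin.consEquiv (fun _ => Bool)) (b, s) : ∀ _ : Fin (n+1), Bool)
        = Fin.cons b s := rfl
    rw [h1, card_trues_cons, Fin.prod_univ_succ]
    simp [Fin.cons_zero, Fin.cons_succ]
  simp only [key]
  congr 1
  · apply Finset.sum_congr rfl; intro s _
    simp only [if_true, mul_ite, mul_zero]
    exact if_congr (by omega) rfl rfl
  · apply Finset.sum_congr rfl; intro s _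
    simp [mul_ite, mul_zero]

lemma sum_bool_const (c : ℝ) (n l : ℕ) :
    (∑ s ∈ Finset.univ.filter
        (fun s : Fin n → Bool => (Finset.univ.filter fun j => s j = true).card = l),
      ∏ j : Fin n, (if s j then c else 1 - c))
    = (n.choose l : ℝ) * c ^ l * (1 - c) ^ (n - l) := by
  rw [Finset.sum_congr rfl (fun s hs => prod_bool_const c n l s (by simpa using hs)),
    Finset.sum_const, card_bool_vec, nsmul_eq_mul, mul_assoc]

variable (p₁ p₀ : ℝ)

lemma bbTrans_zero_zero : bbTrans (fun j => if j = 0 then p₁ else p₀) 0 0 = p₁ := by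
  simp [bbTrans]

lemma prod_shift (n : ℕ) (s : Fin n → Bool) :
    (∏ j : Fin n, (if s j then (fun j : ℕ => if j = 0 then p₁ else p₀) ((j.succ : Fin (n+1)) : ℕ)
        else 1 - (fun j : ℕ => if j = 0 then p₁ else p₀) ((j.succ : Fin (n+1)) : ℕ)))
    = ∏ j : Fin n, (if s j then p₀ else 1 - p₀) := by
  apply Finset.prod_congr rfl
  intro j _
  simp [Fin.val_succ]

lemma bbTrans_zero_succ (m : ℕ) :
    bbTrans (fun j => if j = 0 then p₁ else p₀) 0 (m+1)
      = ((1 - p₁) * (1 - p₀) ^ m) * p₀ := by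
  show (∑ s ∈ Finset.univ.filter
      (fun s : Fin (m + 1) → Bool =>
        (Finset.univ.filter fun j => s j = true).card = 0),
    ∏ j : Fin (m + 1), _) * _ = _
  rw [sum_bool_cons m 0 (fun j b => if b then (if (j:ℕ) = 0 then p₁ else p₀)
    else 1 - (if (j:ℕ) = 0 then p₁ else p₀))]
  have he : (Finset.univ.filter
      (fun s : Fin m → Bool => (Finset.univ.filter fun j => s j = true).card + 1 = 0)) = ∅ := by
    apply Finset.filter_false_of_mem; intro s _; omega
  rw [he]
  simp only [Finset.sum_empty, mul_zero, zero_add]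
  have := prod_shift p₁ p₀ m
  simp only [this]
  rw [sum_bool_const p₀ m 0]
  simp

lemma bbTrans_succ (l m : ℕ) :
    bbTrans (fun j => if j = 0 then p₁ else p₀) (l+1) m
      = (p₁ * (((m+l).choose l : ℝ) * p₀^l * (1-p₀)^m)
        + (1 - p₁) * (((m+l).choose (l+1) : ℝ) * p₀^(l+1) * (1-p₀)^(m-1))) * p₀ := by
  show (∑ s ∈ Finset.univ.filter
      (fun s : Fin ((m + l) + 1) → Bool =>
        (Finset.univ.filter fun j => s j = true).card = l + 1),
    ∏ j : Fin ((m + l) + 1), _) * _ = _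
  rw [sum_bool_cons (m+l) (l+1) (fun j b => if b then (if (j:ℕ) = 0 then p₁ else p₀)
    else 1 - (if (j:ℕ) = 0 then p₁ else p₀))]
  have hf : (Finset.univ.filter
      (fun s : Fin (m+l) → Bool => (Finset.univ.filter fun j => s j = true).card + 1 = l + 1))
      = (Finset.univ.filter
      (fun s : Fin (m+l) → Bool => (Finset.univ.filter fun j => s j = true).card = l)) := by
    apply Finset.filter_congr; intro s _; simp
  rw [hf]
  have := prod_shift p₁ p₀ (m+l)
  simp only [this]
  rw [sum_bool_const p₀ (m+l) l, sum_bool_const p₀ (m+l) (l+1)]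
  have h1 : m + l - l = m := by omega
  have h2 : m + l - (l+1) = m - 1 := by omega
  have h3 : ((0 : Fin (m+l+1)) : ℕ) = 0 := rfl
  simp [h1, h2, h3]

end Combinatorics

section Analysis

variable {p₁ p₀ s : ℝ}

lemma bbTrans_nonneg (hp₁ : 0 < p₁) (hp₁' : p₁ < 1) (hp₀ : 0 < p₀) (hp₀' : p₀ < 1)
    (l m : ℕ) : 0 ≤ bbTrans (fun j => if j = 0 then p₁ else p₀) l m := by
  have h₁ : (0:ℝ) ≤ 1 - p₁ := by linarith
  have h₀ : (0:ℝ) ≤ 1 - p₀ := by linarith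
  match l, m with
  | 0, 0 => rw [bbTrans_zero_zero]; exact hp₁.le
  | 0, m+1 =>
      rw [bbTrans_zero_succ]
      exact mul_nonneg (mul_nonneg h₁ (pow_nonneg h₀ m)) hp₀.le
  | l+1, m =>
      rw [bbTrans_succ]
      refine mul_nonneg (add_nonneg ?_ ?_) hp₀.le
      · exact mul_nonneg hp₁.le (mul_nonneg (mul_nonneg (Nat.cast_nonneg _)
          (pow_nonneg hp₀.le _)) (pow_nonneg h₀ _))
      · exact mul_nonneg h₁ (mul_nonneg (mul_nonneg (Nat.cast_nonneg _)
          (pow_nonneg hp₀.le _)) (pow_nonneg h₀ _))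

/-- Row generating function of the transition kernel. -/
lemma row_hasSum (hp₁ : 0 < p₁) (hp₁' : p₁ < 1) (hp₀ : 0 < p₀) (hp₀' : p₀ < 1)
    (hs0 : 0 ≤ s) (hs1 : s < 1) (l : ℕ) :
    HasSum (fun m => bbTrans (fun j => if j = 0 then p₁ else p₀) l m * s ^ m)
      ((p₁ + s * (p₀ - p₁)) / (1 - s * (1 - p₀)) * (p₀ / (1 - s * (1 - p₀))) ^ l) := by
  have h₀ : (0:ℝ) < 1 - p₀ := by linarith
  have hx0 : 0 ≤ s * (1 - p₀) := mul_nonneg hs0 h₀.le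
  have hx1 : s * (1 - p₀) < 1 := by nlinarith
  have hD : (0:ℝ) < 1 - s * (1 - p₀) := by linarith
  have hDne : (1 - s * (1 - p₀)) ≠ 0 := ne_of_gt hD
  have hxnorm : ‖s * (1 - p₀)‖ < 1 := by
    rw [Real.norm_eq_abs, abs_of_nonneg hx0]; exact hx1
  match l with
  | 0 =>
      have hgeo : HasSum (fun m : ℕ => ((1 - p₁) * p₀ * s) * (s * (1 - p₀)) ^ m)
          (((1 - p₁) * p₀ * s) * (1 - s * (1 - p₀))⁻¹) :=
        (hasSum_geometric_of_lt_one hx0 hx1).mul_left _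
      have key : ∀ m : ℕ,
          bbTrans (fun j => if j = 0 then p₁ else p₀) 0 (m+1) * s ^ (m+1)
            = ((1 - p₁) * p₀ * s) * (s * (1 - p₀)) ^ m := by
        intro m
        rw [bbTrans_zero_succ, mul_pow, pow_succ]
        ring
      have h2 : HasSum (fun m : ℕ =>
          bbTrans (fun j => if j = 0 then p₁ else p₀) 0 (m+1) * s ^ (m+1))
          (((1 - p₁) * p₀ * s) * (1 - s * (1 - p₀))⁻¹) := by
        simpa only [key] using hgeo
      have h3 := (hasSum_nat_add_iff (f := fun m => bbTrans (fun j => if j = 0 then p₁ else p₀) 0 m * s ^ m) 1).mp h2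
      simp only [Finset.range_one, Finset.sum_singleton, bbTrans_zero_zero, pow_zero,
        mul_one] at h3
      convert h3 using 1
      · rfl
      field_simp
      ring
  | l+1 =>
      have hbin : ∀ k : ℕ, HasSum (fun m : ℕ => ((m + k).choose k : ℝ) * (s * (1 - p₀)) ^ m)
          (1 / (1 - s * (1 - p₀)) ^ (k + 1)) :=
        fun k => hasSum_choose_mul_geometric_of_norm_lt_one k hxnorm
      -- first piece
      have hg : HasSum (fun m : ℕ =>
          (p₁ * p₀ ^ (l+1)) * (((m + l).choose l : ℝ) * (s * (1 - p₀)) ^ m))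
          ((p₁ * p₀ ^ (l+1)) * (1 / (1 - s * (1 - p₀)) ^ (l + 1))) :=
        (hbin l).mul_left _
      -- second piece, shifted
      have hh' : HasSum (fun m : ℕ =>
          ((1 - p₁) * p₀ ^ (l+2) * s) * (((m + (l+1)).choose (l+1) : ℝ) * (s * (1 - p₀)) ^ m))
          (((1 - p₁) * p₀ ^ (l+2) * s) * (1 / (1 - s * (1 - p₀)) ^ (l + 2))) :=
        (hbin (l+1)).mul_left _
      set h : ℕ → ℝ := fun m =>
        (1 - p₁) * (((m + l).choose (l+1) : ℝ) * p₀ ^ (l+1) * (1 - p₀) ^ (m - 1)) * p₀ * s ^ m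
        with hh_def
      have hshift : ∀ m : ℕ, h (m + 1)
          = ((1 - p₁) * p₀ ^ (l+2) * s) * (((m + (l+1)).choose (l+1) : ℝ) * (s * (1 - p₀)) ^ m) := by
        intro m
        simp only [hh_def]
        have : m + 1 + l = m + (l + 1) := by omega
        rw [this, Nat.add_sub_cancel, mul_pow, pow_succ, pow_succ]
        ring
      have hh2 : HasSum (fun m => h (m + 1))
          (((1 - p₁) * p₀ ^ (l+2) * s) * (1 / (1 - s * (1 - p₀)) ^ (l + 2))) := by
        simpa only [hshift] using hh'
      have hh3 := (hasSum_nat_add_iff (f := h) 1).mp hh2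
      have hzero : h 0 = 0 := by
        simp only [hh_def]
        have : (l.choose (l+1) : ℝ) = 0 := by
          norm_cast
          exact Nat.choose_eq_zero_of_lt (by omega)
        simp [this]
      simp only [Finset.range_one, Finset.sum_singleton, hzero, add_zero] at hh3
      have hsum := hg.add hh3
      have hdecomp : ∀ m : ℕ,
          bbTrans (fun j => if j = 0 then p₁ else p₀) (l+1) m * s ^ m
            = (p₁ * p₀ ^ (l+1)) * (((m + l).choose l : ℝ) * (s * (1 - p₀)) ^ m) + h m := by
        intro m
        rw [bbTrans_succ, hh_def, mul_pow, pow_succ]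
        ring
      have hfinal : HasSum (fun m =>
          bbTrans (fun j => if j = 0 then p₁ else p₀) (l+1) m * s ^ m)
          ((p₁ * p₀ ^ (l+1)) * (1 / (1 - s * (1 - p₀)) ^ (l + 1))
            + ((1 - p₁) * p₀ ^ (l+2) * s) * (1 / (1 - s * (1 - p₀)) ^ (l + 2))) := by
        simpa only [← hdecomp] using hsum
      convert hfinal using 1
      rw [div_pow]
      field_simp
      ring

end Analysis

/-- **Recursive formula for the probability generating function.**
Let `π` be a stationary distribution of the backwards branching-like process associated
to one cookie of strength `p₁` and bias parameter `p₀ ∈ (1/2,1)`, and let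
`G s = ∑' k, π k * s ^ k`.  Then for all `s ∈ [0,1]`,
`G s = (p₁ + s (p₀ - p₁)) / (1 - s (1 - p₀)) * G (p₀ / (1 - s (1 - p₀)))`. -/
theorem pgf_recursive_formula
    (p₁ p₀ : ℝ) (hp₁ : p₁ ∈ Set.Ioo (0 : ℝ) 1) (hp₀ : p₀ ∈ Set.Ioo (1 / 2 : ℝ) 1)
    (π : ℕ → ℝ) (hπ : IsStationaryDist (fun j => if j = 0 then p₁ else p₀) π) :
    ∀ s ∈ Set.Icc (0 : ℝ) 1,
      (∑' k : ℕ, π k * s ^ k)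
        = (p₁ + s * (p₀ - p₁)) / (1 - s * (1 - p₀))
            * ∑' k : ℕ, π k * (p₀ / (1 - s * (1 - p₀))) ^ k := by
  obtain ⟨hp₁0, hp₁1⟩ := hp₁
  obtain ⟨hp₀half, hp₀1⟩ := hp₀
  have hp₀0 : (0:ℝ) < p₀ := by linarith
  obtain ⟨hπ0, hπ1, hπstat⟩ := hπ
  intro s hs
  obtain ⟨hs0, hs1⟩ := hs
  rcases eq_or_lt_of_le hs1 with heq | hslt
  · subst heq
    rw [show (1:ℝ) - 1 * (1 - p₀) = p₀ by ring,
      show p₁ + 1 * (p₀ - p₁) = p₀ by ring, div_self hp₀0.ne', one_mul]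
  · set q : ℕ → ℝ := fun j => if j = 0 then p₁ else p₀ with hq
    set D := 1 - s * (1 - p₀) with hDdef
    have hD : (0:ℝ) < D := by nlinarith
    set C := (p₁ + s * (p₀ - p₁)) / D with hC
    set t := p₀ / D with ht
    have hC0 : 0 ≤ C := div_nonneg (by nlinarith) hD.le
    have ht0 : 0 ≤ t := div_nonneg hp₀0.le hD.le
    have ht1 : t ≤ 1 := by rw [ht, div_le_one hD]; nlinarith
    have hπsum : Summable π := by
      by_contra hcon
      rw [tsum_eq_zero_of_not_summable hcon] at hπ1; norm_num at hπ1
    have hrow : ∀ l, HasSum (fun m => bbTrans q l m * s ^ m) (C * t ^ l) :=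
      fun l => row_hasSum hp₁0 hp₁1 hp₀0 hp₀1 hs0 hslt l
    have hP0 : ∀ l m, 0 ≤ bbTrans q l m := bbTrans_nonneg hp₁0 hp₁1 hp₀0 hp₀1
    have hterm0 : ∀ l m, 0 ≤ π l * (bbTrans q l m * s ^ m) := fun l m =>
      mul_nonneg (hπ0 l) (mul_nonneg (hP0 l m) (pow_nonneg hs0 m))
    have hsum_pit : Summable (fun l => π l * t ^ l) :=
      Summable.of_nonneg_of_le (fun l => mul_nonneg (hπ0 l) (pow_nonneg ht0 l))
        (fun l => mul_le_of_le_one_right (hπ0 l) (pow_le_one₀ ht0 ht1)) hπsum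
    have hsum_Cpit : Summable (fun l => π l * (C * t ^ l)) :=
      (hsum_pit.mul_left C).congr (fun l => by ring)
    have hsum_pis : Summable (fun k => π k * s ^ k) :=
      Summable.of_nonneg_of_le (fun k => mul_nonneg (hπ0 k) (pow_nonneg hs0 k))
        (fun k => mul_le_of_le_one_right (hπ0 k) (pow_le_one₀ hs0 hs1)) hπsum
    set F : ℕ × ℕ → ℝ≥0∞ :=
      fun p => ENNReal.ofReal (π p.1 * (bbTrans q p.1 p.2 * s ^ p.2)) with hF
    have hrowsum : ∀ l, Summable (fun m => π l * (bbTrans q l m * s ^ m)) :=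
      fun l => ((hrow l).mul_left (π l)).summable
    have hrowF : ∀ l, ∑' m, F (l, m) = ENNReal.ofReal (π l * (C * t ^ l)) := by
      intro l
      rw [← ENNReal.ofReal_tsum_of_nonneg (fun m => hterm0 l m) (hrowsum l)]
      congr 1
      exact ((hrow l).mul_left (π l)).tsum_eq
    have hcolsummable : ∀ m, Summable (fun l => π l * (bbTrans q l m * s ^ m)) := by
      intro m
      refine Summable.of_nonneg_of_le (fun l => hterm0 l m) (fun l => ?_) hsum_Cpit
      exact mul_le_mul_of_nonneg_left
        (le_hasSum (hrow l) m (fun m' _ => mul_nonneg (hP0 l m') (pow_nonneg hs0 m')))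
        (hπ0 l)
    have hcolF : ∀ m, ∑' l, F (l, m) = ENNReal.ofReal (π m * s ^ m) := by
      intro m
      rw [← ENNReal.ofReal_tsum_of_nonneg (fun l => hterm0 l m) (hcolsummable m)]
      congr 1
      calc ∑' l, π l * (bbTrans q l m * s ^ m)
          = ∑' l, (π l * bbTrans q l m) * s ^ m := tsum_congr fun l => by ring
        _ = (∑' l, π l * bbTrans q l m) * s ^ m := tsum_mul_right
        _ = π m * s ^ m := by rw [← hπstat m]
    have key : ENNReal.ofReal (∑' k, π k * s ^ k)
        = ENNReal.ofReal (∑' l, π l * (C * t ^ l)) := by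
      calc ENNReal.ofReal (∑' k, π k * s ^ k)
          = ∑' m, ENNReal.ofReal (π m * s ^ m) :=
            ENNReal.ofReal_tsum_of_nonneg
              (fun k => mul_nonneg (hπ0 k) (pow_nonneg hs0 k)) hsum_pis
        _ = ∑' m, ∑' l, F (l, m) := tsum_congr fun m => (hcolF m).symm
        _ = ∑' l, ∑' m, F (l, m) := ENNReal.tsum_comm
        _ = ∑' l, ENNReal.ofReal (π l * (C * t ^ l)) := tsum_congr hrowF
        _ = ENNReal.ofReal (∑' l, π l * (C * t ^ l)) :=
            (ENNReal.ofReal_tsum_of_nonneg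
              (fun l => mul_nonneg (hπ0 l) (mul_nonneg hC0 (pow_nonneg ht0 l)))
              hsum_Cpit).symm
    have hreal : (∑' k, π k * s ^ k) = ∑' l, π l * (C * t ^ l) :=
      (ENNReal.ofReal_eq_ofReal_iff
        (tsum_nonneg fun k => mul_nonneg (hπ0 k) (pow_nonneg hs0 k))
        (tsum_nonneg fun l => mul_nonneg (hπ0 l) (mul_nonneg hC0 (pow_nonneg ht0 l)))).mp key
    rw [hreal, show (∑' l, π l * (C * t ^ l)) = C * ∑' l, π l * t ^ l from by
      rw [← tsum_mul_left]; exact tsum_congr fun l => by ring]
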